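/- Let G be a connected plane graph with minimum degree at least 3 that contains no cycle of length 4, no cycle of length 7, no cycle of length 9, and no 5-cycle normally adjacent to a 3-cycle. Then every vertex of degree 3 in G is incident with at most two 5-faces. -/

import Mathlib

namespace Paper

open SimpleGraph

variable {V : Type*}

/-- The fixed-point-free involution on darts reversing each dart. -/
def dartFlip (G : SimpleGraph V) : Equiv.Perm G.Dart :=
  ⟨SimpleGraph.Dart.symm, SimpleGraph.Dart.symm,
    fun d => SimpleGraph.Dart.symm_symm d, fun d => SimpleGraph.Dart.symm_symm d⟩

/-- A combinatorial embedding (rotation system) of a simple graph: a permutation of the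
darts whose cycles are exactly the sets of darts emanating from a common vertex. -/
structure PlaneEmbedding (G : SimpleGraph V) where
  rot : Equiv.Perm G.Dart
  fst_rot : ∀ d : G.Dart, (rot d).fst = d.fst
  rot_cyclic : ∀ d e : G.Dart, d.fst = e.fst → rot.SameCycle d e

/-- The face permutation of a combinatorial embedding; its orbits are the (boundary walks
of the) faces of the embedding. -/
def PlaneEmbedding.facePerm {G : SimpleGraph V} (E : PlaneEmbedding G) : Equiv.Perm G.Dart :=
  E.rot * dartFlip G

/-- The face (as its set of boundary darts, i.e. the orbit of the face permutation)
containing a given dart. -/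
def faceOf {G : SimpleGraph V} (E : PlaneEmbedding G) (d : G.Dart) : Set G.Dart :=
  {e | E.facePerm.SameCycle d e}

/-- The length of the boundary walk of the face containing a given dart; a `k`-face is a
face whose boundary walk has length `k`, i.e. whose dart-orbit has size `k`. -/
noncomputable def faceSize {G : SimpleGraph V} (E : PlaneEmbedding G) (d : G.Dart) : ℕ :=
  (faceOf E d).ncard

/-- The number of faces of the embedding lying in a given connected component. -/
noncomputable def componentFaceCount {G : SimpleGraph V} (E : PlaneEmbedding G)
    (c : G.ConnectedComponent) : ℕ :=
  Nat.card (Quotient (Setoid.comap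
    (Subtype.val : {d : G.Dart // G.connectedComponentMk d.fst = c} → G.Dart)
    (Equiv.Perm.SameCycle.setoid E.facePerm)))

/-- The embedding is plane (genus zero): Euler's formula `V - E + F = 2` holds on each
connected component containing an edge (stated as `2V + 2F = #darts + 4`, using that the
number of darts is twice the number of edges). -/
def PlaneEmbedding.IsPlane {G : SimpleGraph V} (E : PlaneEmbedding G) : Prop :=
  ∀ c : G.ConnectedComponent, (∃ d : G.Dart, G.connectedComponentMk d.fst = c) →
    2 * {v : V | G.connectedComponentMk v = c}.ncard + 2 * componentFaceCount E c
      = {d : G.Dart | G.connectedComponentMk d.fst = c}.ncard + 4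

/-- `G` is a planar graph: it admits a plane (genus-zero) combinatorial embedding. -/
def IsPlanar (G : SimpleGraph V) : Prop :=
  ∃ E : PlaneEmbedding G, E.IsPlane

/-- `G` has no cycle of length `n`. -/
def NoCycleLen (G : SimpleGraph V) (n : ℕ) : Prop :=
  ∀ (v : V) (c : G.Walk v v), c.IsCycle → c.length ≠ n

/-- Two cycles (given as closed walks) are normally adjacent: their intersection is
isomorphic to `K₂`, i.e. they share exactly one edge together with its two endpoints. -/
def NormAdjWalks (G : SimpleGraph V) {a b : V} (c₁ : G.Walk a a) (c₂ : G.Walk b b) : Prop :=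
  ∃ x y : V, x ≠ y ∧ s(x, y) ∈ c₁.edges ∧ s(x, y) ∈ c₂.edges ∧
    (∀ z : V, (z ∈ c₁.support ∧ z ∈ c₂.support) ↔ (z = x ∨ z = y))

/-- `G` has no `5`-cycle normally adjacent to a `3`-cycle. -/
def No5CycleNormAdj3 (G : SimpleGraph V) : Prop :=
  ∀ (a b : V) (c₁ : G.Walk a a) (c₂ : G.Walk b b),
    c₁.IsCycle → c₁.length = 5 → c₂.IsCycle → c₂.length = 3 →
      ¬ NormAdjWalks G c₁ c₂

/-- `d` lists the boundary darts of a face in order, and this boundary is the closed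
walk `v 0, v 1, …, v (n-1), v 0`. -/
def FaceTraversal {G : SimpleGraph V} (E : PlaneEmbedding G) {n : ℕ}
    (v : ZMod n → V) (d : ZMod n → G.Dart) : Prop :=
  (∀ i, (d i).toProd = (v i, v (i + 1))) ∧ ∀ i, E.facePerm (d i) = d (i + 1)

/-- The cycle `v 0, v 1, …, v (n-1), v 0` (with distinct vertices) bounds a face of the
embedding (traversed in one of the two possible directions). -/
def CycleBoundsFace {G : SimpleGraph V} (E : PlaneEmbedding G) {n : ℕ}
    (v : ZMod n → V) : Prop :=
  Function.Injective v ∧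
    ((∃ d, FaceTraversal E v d) ∨ (∃ d, FaceTraversal E (fun i => v (-i)) d))

/-- The `i`-th vertex of the boundary walk of the face containing the dart `d0`. -/
def boundaryVert {G : SimpleGraph V} (E : PlaneEmbedding G) (d0 : G.Dart) (i : ℕ) : V :=
  ((E.facePerm ^ i) d0).fst

/-- The faces containing the darts `d1`, `d2` are adjacent: their boundaries share at
least one edge. -/
def FacesAdjacent {G : SimpleGraph V} (E : PlaneEmbedding G) (d1 d2 : G.Dart) : Prop :=
  ∃ e1 e2 : G.Dart, E.facePerm.SameCycle d1 e1 ∧ E.facePerm.SameCycle d2 e2 ∧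
    e1.edge = e2.edge

/-- The set of vertices on the boundary of the face containing the dart `d`. -/
def faceVerts {G : SimpleGraph V} (E : PlaneEmbedding G) (d : G.Dart) : Set V :=
  {x | ∃ e : G.Dart, E.facePerm.SameCycle d e ∧ e.fst = x}

/-- The set of edges on the boundary of the face containing the dart `d`. -/
def faceEdges {G : SimpleGraph V} (E : PlaneEmbedding G) (d : G.Dart) : Set (Sym2 V) :=
  {s | ∃ e : G.Dart, E.facePerm.SameCycle d e ∧ e.edge = s}

section Configs

variable [Fintype V]

/-- Configuration (1): a `10`-cycle bounding a face together with a `3`-cycle bounding a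
face, normally adjacent to it along one edge, all eleven vertices having degree `3`. -/
def Config1 (G : SimpleGraph V) [DecidableRel G.Adj] (E : PlaneEmbedding G) : Prop :=
  ∃ (v : ZMod 10 → V) (w : ZMod 3 → V) (u : V),
    CycleBoundsFace E v ∧ CycleBoundsFace E w ∧
    ({w 0, w 1, w 2} : Set V) = {v 0, v 1, u} ∧ u ∉ Set.range v ∧
    (∀ i, G.degree (v i) = 3) ∧ G.degree u = 3

/-- Configuration (2): two vertex-disjoint `10`-cycles `x₁…x₁₀` and `y₁…y₁₀` (indexed here
from `0`), each bounding a face, with edges `x₃y₃` and `x₁₀y₁₀`; all `xᵢ` have degree `3`,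
`y₃` and `y₁₀` have degree `4`, the other `yᵢ` have degree `3`. -/
def Config2 (G : SimpleGraph V) [DecidableRel G.Adj] (E : PlaneEmbedding G) : Prop :=
  ∃ x y : ZMod 10 → V,
    CycleBoundsFace E x ∧ CycleBoundsFace E y ∧
    Set.range x ∩ Set.range y = ∅ ∧
    G.Adj (x 2) (y 2) ∧ G.Adj (x 9) (y 9) ∧
    (∀ i, G.degree (x i) = 3) ∧
    G.degree (y 2) = 4 ∧ G.degree (y 9) = 4 ∧
    (∀ i, i ≠ 2 → i ≠ 9 → G.degree (y i) = 3)

/-- Configuration (3): an `8`-cycle bounding a face and a `5`-cycle bounding a face that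
are normally adjacent (sharing exactly one edge and its endpoints), all eleven vertices
having degree `3`. -/
def Config3 (G : SimpleGraph V) [DecidableRel G.Adj] (E : PlaneEmbedding G) : Prop :=
  ∃ (a : ZMod 8 → V) (b : ZMod 5 → V),
    CycleBoundsFace E a ∧ CycleBoundsFace E b ∧
    Set.range a ∩ Set.range b = {a 0, a 1} ∧
    (∃ j : ZMod 5, (b j = a 0 ∧ b (j + 1) = a 1) ∨ (b j = a 1 ∧ b (j + 1) = a 0)) ∧
    (∀ i, G.degree (a i) = 3) ∧ (∀ j, G.degree (b j) = 3)

end Configs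

open Classical in
/-- The function resulting from the operation `Delete_[u](G, f)`: every neighbour of `u`
loses one unit. -/
noncomputable def deleteFun (G : SimpleGraph V) (u : V) (f : V → ℤ) : V → ℤ :=
  fun v => if G.Adj u v then f v - 1 else f v

open Classical in
/-- The function resulting from the operation `DeleteSave_[u; w](G, f)`: every neighbour
of `u` except `w` loses one unit. -/
noncomputable def deleteSaveFun (G : SimpleGraph V) (u w : V) (f : V → ℤ) : V → ℤ :=
  fun v => if G.Adj u v ∧ v ≠ w then f v - 1 else f v

/-- All vertices of the subgraph of `G` induced on `S` can be removed by a sequence of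
legal applications of the `Delete` and `DeleteSave` operations, starting from the value
function `f`. -/
inductive WeaklyReducible (G : SimpleGraph V) : Set V → (V → ℤ) → Prop
  | empty (f : V → ℤ) : WeaklyReducible G ∅ f
  | delete (S : Set V) (f : V → ℤ) (u : V) (hu : u ∈ S)
      (hnn : ∀ v ∈ S \ {u}, 0 ≤ deleteFun G u f v)
      (h : WeaklyReducible G (S \ {u}) (deleteFun G u f)) : WeaklyReducible G S f
  | deleteSave (S : Set V) (f : V → ℤ) (u w : V) (hu : u ∈ S) (hw : w ∈ S \ {u})
      (hadj : G.Adj u w) (hlt : f w < f u)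
      (hnn : ∀ v ∈ S \ {u}, 0 ≤ deleteSaveFun G u w f v)
      (h : WeaklyReducible G (S \ {u}) (deleteSaveFun G u w f)) : WeaklyReducible G S f

/-- `G` is weakly `d`-degenerate: all its vertices can be removed by a sequence of legal
applications of the `Delete` and `DeleteSave` operations, starting from the constant
function of value `d`. -/
def WeaklyDegenerate (G : SimpleGraph V) (d : ℤ) : Prop :=
  WeaklyReducible G Set.univ (fun _ => d)

/-- The canonical cover of `G` with `s = 2`: two disjoint copies of `G`, on vertex set
`V × Fin 2`, with `(u, i)` adjacent to `(v, j)` iff `uv ∈ E(G)` and `i = j`. -/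
def canonicalCover2 (G : SimpleGraph V) : SimpleGraph (V × Fin 2) where
  Adj a b := G.Adj a.1 b.1 ∧ a.2 = b.2
  symm := ⟨fun _ _ h => ⟨h.1.symm, h.2.symm⟩⟩
  loopless := ⟨fun a h => G.loopless.1 a.1 h.1⟩

/-- `T` is a strictly `f`-degenerate transversal-candidate set: every nonempty subgraph
`K` of the induced subgraph `H[T]` has a vertex `x` with `deg_K x < f x`. -/
def StrictlyFDegenerateOn {W : Type*} (H : SimpleGraph W) (f : W → ℕ) (T : Set W) : Prop :=
  ∀ K : H.Subgraph, K.verts ⊆ T → K.verts.Nonempty →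
    ∃ x ∈ K.verts, Nat.card (K.neighborSet x) < f x

end Paper

namespace Stmt11

open SimpleGraph Paper

variable {V : Type*} {G : SimpleGraph V}

/-! ### Generic permutation-orbit facts -/

lemma orbit_min_period {α : Type*} [Finite α] (P : Equiv.Perm α) (d : α)
    (h : {e | P.SameCycle d e}.ncard = 5) :
    Function.minimalPeriod ⇑P d = 5 := by
  classical
  have hper : Function.IsPeriodicPt ⇑P (orderOf P) d := by
    rw [Function.IsPeriodicPt, Function.IsFixedPt, Equiv.Perm.iterate_eq_pow,
      pow_orderOf_eq_one]
    rfl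
  have hpos : 0 < Function.minimalPeriod ⇑P d :=
    hper.minimalPeriod_pos (orderOf_pos P)
  set m := Function.minimalPeriod ⇑P d with hm
  have hset : {e | P.SameCycle d e} = (fun k => (⇑P)^[k] d) '' Set.Iio m := by
    ext e
    constructor
    · intro he
      obtain ⟨i, _, hi⟩ := he.exists_pow_eq'
      refine ⟨i % m, Nat.mod_lt _ hpos, ?_⟩
      show (⇑P)^[i % m] d = e
      rw [hm, Function.iterate_mod_minimalPeriod_eq]
      simpa [Equiv.Perm.iterate_eq_pow] using hi
    · rintro ⟨k, _, rfl⟩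
      exact ⟨(k : ℤ), by simp [Equiv.Perm.iterate_eq_pow, zpow_natCast]⟩
  have hIio : (Set.Iio m).ncard = m := by
    rw [← Finset.coe_Iio, Set.ncard_coe_finset, Nat.card_Iio]
  rw [hset, Set.ncard_image_of_injOn
    (by simpa using Function.iterate_injOn_Iio_minimalPeriod), hIio] at h
  omega

lemma orbit_pow_five {α : Type*} [Finite α] (P : Equiv.Perm α) (d : α)
    (h : {e | P.SameCycle d e}.ncard = 5) : (P ^ 5) d = d := by
  have := Function.iterate_minimalPeriod (f := ⇑P) (x := d)
  rw [orbit_min_period P d h] at this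
  rw [← Equiv.Perm.iterate_eq_pow]; exact this

lemma orbit_two {α : Type*} (P : Equiv.Perm α) {x : α} (h2 : P (P x) = x) :
    ∀ n : ℕ, (P ^ n) x = x ∨ (P ^ n) x = P x := by
  intro n
  induction n with
  | zero => left; simp
  | succ k ih =>
    rcases ih with h | h
    · right; rw [pow_succ', Equiv.Perm.mul_apply, h]
    · left; rw [pow_succ', Equiv.Perm.mul_apply, h, h2]

/-! ### Basic facts about embeddings -/

lemma facePerm_apply (E : PlaneEmbedding G) (e : G.Dart) : E.facePerm e = E.rot e.symm := rfl

lemma fst_facePerm (E : PlaneEmbedding G) (e : G.Dart) : (E.facePerm e).fst = e.snd := by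
  rw [facePerm_apply, E.fst_rot]; rfl

lemma rot_ne_self (E : PlaneEmbedding G) {e f : G.Dart} (hef : f ≠ e) (h : e.fst = f.fst) :
    E.rot e ≠ e := by
  intro hfix
  obtain ⟨i, hi⟩ := E.rot_cyclic e f h
  exact hef (by rw [← hi, Equiv.Perm.zpow_apply_eq_self_of_apply_eq_self hfix])

lemma rot_not_back [Fintype V] [DecidableRel G.Adj] (E : PlaneEmbedding G) {x y z : G.Dart}
    (hfxz : x.fst = z.fst) (hzx : z ≠ x) (hzy : z ≠ y) (hxy : E.rot x = y)
    (h : E.rot y = x) : False := by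
  obtain ⟨i, _, hi⟩ := (E.rot_cyclic x z hfxz).exists_pow_eq'
  rcases orbit_two E.rot (x := x) (by rw [hxy, h]) i with h' | h' <;> rw [h'] at hi
  · exact hzx hi.symm
  · rw [hxy] at hi; exact hzy hi.symm

lemma facePerm_ne_symm [Fintype V] [DecidableEq V] [DecidableRel G.Adj] (E : PlaneEmbedding G)
    (hmin : ∀ v : V, 3 ≤ G.degree v) (e : G.Dart) : E.facePerm e ≠ e.symm := by
  have hcard : 1 < (Finset.univ.filter fun d : G.Dart => d.fst = e.snd).card := by
    rw [SimpleGraph.dart_fst_fiber_card_eq_degree]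
    have := hmin e.snd; omega
  have hes : e.symm ∈ (Finset.univ.filter fun d : G.Dart => d.fst = e.snd) := by
    simp [SimpleGraph.Dart.symm, Prod.swap]
  obtain ⟨f, hf, hfe⟩ := Finset.exists_mem_ne hcard e.symm
  rw [facePerm_apply]
  exact rot_ne_self E hfe (by simpa using (Finset.mem_filter.mp hf).2.symm)

lemma rot_swap_contra [Fintype V] [DecidableEq V] [DecidableRel G.Adj] (E : PlaneEmbedding G)
    (hmin : ∀ v : V, 3 ≤ G.degree v) {x y : G.Dart}
    (hxy : E.rot x = y) (hyx : E.rot y = x) : False := by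
  have hsub : (Finset.univ.filter fun d : G.Dart => d.fst = x.fst) ⊆ {x, y} := by
    intro h hh
    have hsc : E.rot.SameCycle x h :=
      E.rot_cyclic x h ((Finset.mem_filter.mp hh).2.symm)
    obtain ⟨i, _, hi⟩ := hsc.exists_pow_eq'
    rcases orbit_two E.rot (by rw [hxy, hyx]) i with h' | h' <;>
      rw [h'] at hi <;> simp [← hi, hxy]
  have hle := Finset.card_le_card hsub
  rw [SimpleGraph.dart_fst_fiber_card_eq_degree] at hle
  have h3 := hmin x.fst
  have h2 : ({x, y} : Finset G.Dart).card ≤ 2 :=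
    (Finset.card_insert_le _ _).trans (by simp)
  omega

/-! ### Forbidden cycles -/

lemma no4 (h4 : NoCycleLen G 4) {p q r s : V}
    (a1 : G.Adj p q) (a2 : G.Adj q r) (a3 : G.Adj r s) (a4 : G.Adj s p)
    (hpr : p ≠ r) (hqs : q ≠ s) : False := by
  have h1 := a1.ne; have h1' := a1.ne'; have h2 := a2.ne; have h2' := a2.ne'
  have h3 := a3.ne; have h3' := a3.ne'; have h4'' := a4.ne; have h4''' := a4.ne'
  have hrp := hpr.symm; have hsq := hqs.symm
  have hc : (Walk.cons a1 (Walk.cons a2 (Walk.cons a3 (Walk.cons a4 Walk.nil)))).IsCycle := by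
    rw [Walk.cons_isCycle_iff]
    constructor
    · rw [Walk.isPath_def]
      simp only [Walk.support_cons, Walk.support_nil, List.nodup_cons, List.mem_cons,
        List.not_mem_nil, List.nodup_nil, or_false, and_true, not_or]
      tauto
    · simp only [Walk.edges_cons, Walk.edges_nil, List.mem_cons, Sym2.eq, Sym2.rel_iff',
        Prod.mk.injEq, Prod.swap_prod_mk, List.not_mem_nil, or_false, not_or]
      tauto
  exact h4 p _ hc (by simp)

set_option maxHeartbeats 1000000 in
lemma no9 (h9 : NoCycleLen G 9) {p1 p2 p3 p4 p5 p6 p7 p8 p9 : V}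
    (a1 : G.Adj p1 p2) (a2 : G.Adj p2 p3) (a3 : G.Adj p3 p4) (a4 : G.Adj p4 p5)
    (a5 : G.Adj p5 p6) (a6 : G.Adj p6 p7) (a7 : G.Adj p7 p8) (a8 : G.Adj p8 p9)
    (a9 : G.Adj p9 p1)
    (h13 : p1 ≠ p3) (h14 : p1 ≠ p4) (h15 : p1 ≠ p5) (h16 : p1 ≠ p6) (h17 : p1 ≠ p7)
    (h18 : p1 ≠ p8)
    (h24 : p2 ≠ p4) (h25 : p2 ≠ p5) (h26 : p2 ≠ p6) (h27 : p2 ≠ p7) (h28 : p2 ≠ p8)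
    (h29 : p2 ≠ p9)
    (h35 : p3 ≠ p5) (h36 : p3 ≠ p6) (h37 : p3 ≠ p7) (h38 : p3 ≠ p8) (h39 : p3 ≠ p9)
    (h46 : p4 ≠ p6) (h47 : p4 ≠ p7) (h48 : p4 ≠ p8) (h49 : p4 ≠ p9)
    (h57 : p5 ≠ p7) (h58 : p5 ≠ p8) (h59 : p5 ≠ p9)
    (h68 : p6 ≠ p8) (h69 : p6 ≠ p9)
    (h79 : p7 ≠ p9) : False := by
  have b1 := a1.ne; have b1' := a1.ne'; have b2 := a2.ne; have b2' := a2.ne'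
  have b3 := a3.ne; have b3' := a3.ne'; have b4 := a4.ne; have b4' := a4.ne'
  have b5 := a5.ne; have b5' := a5.ne'; have b6 := a6.ne; have b6' := a6.ne'
  have b7 := a7.ne; have b7' := a7.ne'; have b8 := a8.ne; have b8' := a8.ne'
  have b9 := a9.ne; have b9' := a9.ne'
  have c13 := h13.symm; have c14 := h14.symm; have c15 := h15.symm; have c16 := h16.symm
  have c17 := h17.symm; have c18 := h18.symm; have c24 := h24.symm; have c25 := h25.symm
  have c26 := h26.symm; have c27 := h27.symm; have c28 := h28.symm; have c29 := h29.symm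
  have c35 := h35.symm; have c36 := h36.symm; have c37 := h37.symm; have c38 := h38.symm
  have c39 := h39.symm; have c46 := h46.symm; have c47 := h47.symm; have c48 := h48.symm
  have c49 := h49.symm; have c57 := h57.symm; have c58 := h58.symm; have c59 := h59.symm
  have c68 := h68.symm; have c69 := h69.symm; have c79 := h79.symm
  have hc : (Walk.cons a1 (Walk.cons a2 (Walk.cons a3 (Walk.cons a4 (Walk.cons a5
      (Walk.cons a6 (Walk.cons a7 (Walk.cons a8 (Walk.cons a9 Walk.nil))))))))).IsCycle := by
    rw [Walk.cons_isCycle_iff]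
    constructor
    · rw [Walk.isPath_def]
      simp only [Walk.support_cons, Walk.support_nil, List.nodup_cons, List.mem_cons,
        List.not_mem_nil, List.nodup_nil, or_false, and_true, not_or]
      refine ⟨⟨b2, h24, h25, h26, h27, h28, h29, b1'⟩, ⟨b3, h35, h36, h37, h38, h39, c13⟩,
        ⟨b4, h46, h47, h48, h49, c14⟩, ⟨b5, h57, h58, h59, c15⟩, ⟨b6, h68, h69, c16⟩,
        ⟨b7, h79, c17⟩, ⟨b8, c18⟩, b9, not_false⟩
    · simp only [Walk.edges_cons, Walk.edges_nil, List.mem_cons, Sym2.eq, Sym2.rel_iff',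
        Prod.mk.injEq, Prod.swap_prod_mk, List.not_mem_nil, or_false, not_or]
      tauto
  exact h9 p1 _ hc (by simp)

/-! ### Face data -/

structure FaceData (G : SimpleGraph V) (v a b c e : V) : Prop where
  ava : G.Adj v a
  aab : G.Adj a b
  abc : G.Adj b c
  ace : G.Adj c e
  aev : G.Adj e v
  n01 : v ≠ a
  n02 : v ≠ b
  n03 : v ≠ c
  n04 : v ≠ e
  n12 : a ≠ b
  n13 : a ≠ c
  n14 : a ≠ e
  n23 : b ≠ c
  n24 : b ≠ e
  n34 : c ≠ e

lemma face_data [Fintype V] [DecidableEq V] [DecidableRel G.Adj]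
    (E : PlaneEmbedding G) (hmin : ∀ v : V, 3 ≤ G.degree v) {d dp : G.Dart}
    (hrot : E.rot dp = d) (hfst : dp.fst = d.fst)
    (h5 : E.facePerm (E.facePerm (E.facePerm (E.facePerm (E.facePerm d)))) = d) :
    FaceData G d.fst d.snd (E.facePerm (E.facePerm d)).fst
      (E.facePerm (E.facePerm (E.facePerm d))).fst dp.snd ∧
    E.facePerm (E.facePerm (E.facePerm (E.facePerm d))) = dp.symm := by
  set P := E.facePerm with hP
  have nb : ∀ e : G.Dart, P e ≠ e.symm := facePerm_ne_symm E hmin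
  have gap2 : ∀ e : G.Dart, (P (P e)).fst ≠ e.fst := by
    intro e h
    refine nb e (Dart.ext _ _ (Prod.ext (fst_facePerm E e) ?_))
    show (P e).snd = e.symm.snd
    rw [← fst_facePerm E (P e), h]; rfl
  have key4 : P (P (P (P d))) = dp.symm := by
    apply E.facePerm.injective
    show P (P (P (P (P d)))) = P dp.symm
    rw [h5, hP, facePerm_apply, Dart.symm_symm, hrot]
  have c1 : (P d).fst = d.snd := fst_facePerm E d
  have c2 : (P (P d)).fst = (P d).snd := fst_facePerm E (P d)
  have c3 : (P (P (P d))).fst = (P (P d)).snd := fst_facePerm E (P (P d))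
  have c4 : (P (P (P (P d)))).fst = (P (P (P d))).snd := fst_facePerm E (P (P (P d)))
  have c5 : d.fst = (P (P (P (P d)))).snd := by
    rw [← fst_facePerm E (P (P (P (P d)))), h5]
  have c4' : (P (P (P (P d)))).fst = dp.snd := by rw [key4]; rfl
  refine ⟨⟨d.adj, ?_, ?_, ?_, ?_, d.fst_ne_snd, ?_, ?_, ?_, ?_, ?_, ?_, ?_, ?_, ?_⟩, key4⟩
  · have := (P d).adj; rwa [c1, ← c2] at this
  · have := (P (P d)).adj; rwa [← c3] at this
  · have := (P (P (P d))).adj; rwa [← c4, c4'] at this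
  · have := dp.adj; rw [hfst] at this; exact this.symm
  · exact fun h => gap2 d h.symm
  · intro h; exact gap2 (P (P (P d))) (by rw [h5, ← h])
  · intro h; rw [← c4'] at h
    exact (P (P (P (P d)))).fst_ne_snd (h.symm.trans c5)
  · intro h; rw [← c1, c2] at h; exact (P d).fst_ne_snd h
  · intro h; rw [← c1] at h
    exact gap2 (P d) (by rw [← h])
  · intro h
    have hg := gap2 (P (P (P (P d))))
    rw [h5] at hg
    exact hg (by rw [c1, c4', h])
  · intro h; rw [c3] at h; exact (P (P d)).fst_ne_snd h
  · intro h; rw [← c4'] at h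
    exact gap2 (P (P d)) h.symm
  · intro h; rw [← c4', c4] at h; exact (P (P (P d))).fst_ne_snd h

end Stmt11

namespace Stmt11

open SimpleGraph Paper

variable {V : Type*} {G : SimpleGraph V}

lemma hard_case [Fintype V] [DecidableEq V] [DecidableRel G.Adj]
    (E : PlaneEmbedding G) (hmin : ∀ v : V, 3 ≤ G.degree v) {d d' : G.Dart}
    (K : E.facePerm (E.facePerm (E.facePerm (E.facePerm d'))) = d.symm)
    (h : (E.facePerm (E.facePerm d)).fst = (E.facePerm (E.facePerm (E.facePerm d'))).fst) :
    False := by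
  set P := E.facePerm with hP
  have hy_snd : (P (P (P d'))).snd = d.snd := by
    rw [← fst_facePerm E (P (P (P d')))]
    show (P (P (P (P d')))).fst = d.snd
    rw [K]; rfl
  have h1 : P (P (P d')) = (P d).symm := by
    refine Dart.ext _ _ (Prod.ext ?_ ?_)
    · show (P (P (P d'))).fst = (P d).snd
      rw [← fst_facePerm E (P d)]
      exact h.symm
    · show (P (P (P d'))).snd = (P d).fst
      rw [hy_snd, fst_facePerm E d]
  have h2 := facePerm_apply E (P (P (P d')))
  rw [K, h1, Dart.symm_symm] at h2
  exact rot_swap_contra E hmin (facePerm_apply E d).symm h2.symm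

set_option maxHeartbeats 1000000 in
lemma core [Fintype V] [DecidableEq V] [DecidableRel G.Adj]
    (E : PlaneEmbedding G)
    (hmin : ∀ v : V, 3 ≤ G.degree v)
    (h4 : NoCycleLen G 4) (h9 : NoCycleLen G 9)
    (v : V) (hdeg : G.degree v = 3)
    (d1 d2 d3 : G.Dart) (hv1 : d1.fst = v) (hv2 : d2.fst = v) (hv3 : d3.fst = v)
    (hr1 : E.rot d1 = d2) (hr2 : E.rot d2 = d3) (hr3 : E.rot d3 = d1)
    (hne12 : d1 ≠ d2) (hne13 : d1 ≠ d3) (hne23 : d2 ≠ d3)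
    (hf1 : faceSize E d1 = 5) (hf2 : faceSize E d2 = 5) (hf3 : faceSize E d3 = 5) :
    False := by
  have h5 : ∀ d : G.Dart, faceSize E d = 5 →
      E.facePerm (E.facePerm (E.facePerm (E.facePerm (E.facePerm d)))) = d := by
    intro d hf
    have h' : (E.facePerm ^ 5) d = d := orbit_pow_five E.facePerm d hf
    simpa [pow_succ, Equiv.Perm.mul_apply] using h'
  obtain ⟨F1, K1⟩ := face_data E hmin hr3 (hv3.trans hv1.symm) (h5 d1 hf1)
  obtain ⟨F2, K2⟩ := face_data E hmin hr1 (hv1.trans hv2.symm) (h5 d2 hf2)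
  obtain ⟨F3, K3⟩ := face_data E hmin hr2 (hv2.trans hv3.symm) (h5 d3 hf3)
  rw [hv1] at F1; rw [hv2] at F2; rw [hv3] at F3
  set P := E.facePerm with hP
  set a1 := d1.snd with ha1
  set a2 := d2.snd with ha2
  set a3 := d3.snd with ha3
  set b1 := (P (P d1)).fst with hb1
  set b2 := (P (P d2)).fst with hb2
  set b3 := (P (P d3)).fst with hb3
  set c1 := (P (P (P d1))).fst with hc1
  set c2 := (P (P (P d2))).fst with hc2
  set c3 := (P (P (P d3))).fst with hc3
  -- F1 : FaceData G v a1 b1 c1 a3, F2 : FaceData G v a2 b2 c2 a1, F3 : FaceData G v a3 b3 c3 a2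
  have hna12 : a1 ≠ a2 := fun h => hne12 (Dart.ext _ _ (Prod.ext (hv1.trans hv2.symm) h))
  have hna13 : a1 ≠ a3 := fun h => hne13 (Dart.ext _ _ (Prod.ext (hv1.trans hv3.symm) h))
  have hna23 : a2 ≠ a3 := fun h => hne23 (Dart.ext _ _ (Prod.ext (hv2.trans hv3.symm) h))
  have hA12 : ¬ G.Adj a1 a2 := fun h => no4 h4 F2.aab F2.abc F2.ace h F2.n13 F2.n24
  have hA23 : ¬ G.Adj a2 a3 := fun h => no4 h4 F3.aab F3.abc F3.ace h F3.n13 F3.n24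
  have hA31 : ¬ G.Adj a3 a1 := fun h => no4 h4 F1.aab F1.abc F1.ace h F1.n13 F1.n24
  have hb1a2 : b1 ≠ a2 := fun h => hA12 (h ▸ F1.aab)
  have hc1a2 : c1 ≠ a2 := fun h => hA23 (h ▸ F1.ace)
  have hb2a3 : b2 ≠ a3 := fun h => hA23 (h ▸ F2.aab)
  have hc2a3 : c2 ≠ a3 := fun h => hA31 (h ▸ F2.ace)
  have hb3a1 : b3 ≠ a1 := fun h => hA31 (h ▸ F3.aab)
  have hc3a1 : c3 ≠ a1 := fun h => hA12 (h ▸ F3.ace)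
  have hbb12 : b1 ≠ b2 := fun h =>
    no4 h4 F1.ava F1.aab (by rw [h]; exact F2.aab.symm) F2.ava.symm F1.n02 hna12
  have hbb13 : b1 ≠ b3 := fun h =>
    no4 h4 F1.ava F1.aab (by rw [h]; exact F3.aab.symm) F3.ava.symm F1.n02 hna13
  have hbb23 : b2 ≠ b3 := fun h =>
    no4 h4 F2.ava F2.aab (by rw [h]; exact F3.aab.symm) F3.ava.symm F2.n02 hna23
  have hcc12 : c1 ≠ c2 := fun h =>
    no4 h4 F3.ava F1.ace.symm (by rw [h]; exact F2.ace) F1.ava.symm F1.n03 hna13.symm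
  have hcc13 : c1 ≠ c3 := fun h =>
    no4 h4 F3.ava F1.ace.symm (by rw [h]; exact F3.ace) F2.ava.symm F1.n03 hna23.symm
  have hcc23 : c2 ≠ c3 := fun h =>
    no4 h4 F1.ava F2.ace.symm (by rw [h]; exact F3.ace) F2.ava.symm F2.n03 hna12
  have hb1c3 : b1 ≠ c3 := fun h =>
    no4 h4 F1.ava F1.aab (by rw [h]; exact F3.ace) F2.ava.symm F1.n02 hna12
  have hb2c1 : b2 ≠ c1 := fun h =>
    no4 h4 F2.ava F2.aab (by rw [h]; exact F1.ace) F3.ava.symm F2.n02 hna23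
  have hb3c2 : b3 ≠ c2 := fun h =>
    no4 h4 F3.ava F3.aab (by rw [h]; exact F2.ace) F1.ava.symm F3.n02 hna13.symm
  have hb1c2 : b1 ≠ c2 := fun h => hard_case E hmin K2 h
  have hb2c3 : b2 ≠ c3 := fun h => hard_case E hmin K3 h
  have hb3c1 : b3 ≠ c1 := fun h => hard_case E hmin K1 h
  exact no9 h9 F1.aab F1.abc F1.ace F3.aab F3.abc F3.ace F2.aab F2.abc F2.ace
    F1.n13 F1.n14 hb3a1.symm hc3a1.symm hna12 F2.n24.symm
    F1.n24 hbb13 hb1c3 hb1a2 hbb12 hb1c2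
    hb3c1.symm hcc13 hc1a2 hb2c1.symm hcc12
    F3.n13 hna23.symm hb2a3.symm hc2a3.symm
    F3.n24 hbb23.symm hb3c2
    hb2c3.symm hcc23.symm
    F2.n13

end Stmt11

open SimpleGraph

/-- Every vertex of degree 3 is incident with at most two 5-faces. -/
theorem statement11 {V : Type*} [Fintype V] (G : SimpleGraph V) [DecidableRel G.Adj]
    (hconn : G.Connected)
    (E : Paper.PlaneEmbedding G) (hE : E.IsPlane)
    (hmin : ∀ v : V, 3 ≤ G.degree v)
    (h4 : Paper.NoCycleLen G 4) (h7 : Paper.NoCycleLen G 7)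
    (h9 : Paper.NoCycleLen G 9) (h53 : Paper.No5CycleNormAdj3 G) :
    ∀ v : V, G.degree v = 3 → ∀ d1 d2 d3 : G.Dart,
      d1.fst = v → d2.fst = v → d3.fst = v →
      Paper.faceSize E d1 = 5 → Paper.faceSize E d2 = 5 → Paper.faceSize E d3 = 5 →
      E.facePerm.SameCycle d1 d2 ∨ E.facePerm.SameCycle d1 d3 ∨
        E.facePerm.SameCycle d2 d3 := by
  classical
  intro v hdeg d1 d2 d3 hv1 hv2 hv3 hf1 hf2 hf3
  by_contra hcon
  push_neg at hcon
  obtain ⟨h12, h13, h23⟩ := hcon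
  have hne12 : d1 ≠ d2 := fun h => h12 (h ▸ Equiv.Perm.SameCycle.refl _ _)
  have hne13 : d1 ≠ d3 := fun h => h13 (h ▸ Equiv.Perm.SameCycle.refl _ _)
  have hne23 : d2 ≠ d3 := fun h => h23 (h ▸ Equiv.Perm.SameCycle.refl _ _)
  have hfib : (Finset.univ.filter fun d : G.Dart => d.fst = v) = {d1, d2, d3} := by
    symm
    apply Finset.eq_of_subset_of_card_le
    · intro x hx
      simp only [Finset.mem_insert, Finset.mem_singleton] at hx
      rcases hx with rfl | rfl | rfl <;> simp [hv1, hv2, hv3]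
    · have hcard : (Finset.univ.filter fun d : G.Dart => d.fst = v).card = G.degree v := by
        convert SimpleGraph.dart_fst_fiber_card_eq_degree G v using 3
      rw [hcard, hdeg, Finset.card_insert_of_notMem (by simp [hne12, hne13]),
        Finset.card_insert_of_notMem (by simp [hne23]), Finset.card_singleton]
  have hmem : ∀ e : G.Dart, e.fst = v → e = d1 ∨ e = d2 ∨ e = d3 := by
    intro e he
    have : e ∈ ({d1, d2, d3} : Finset G.Dart) := by
      rw [← hfib]; simp [he]
    simpa using this
  have hrot1 := hmem (E.rot d1) (by rw [E.fst_rot, hv1])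
  rcases hrot1 with h1 | h1 | h1
  · exact absurd h1 (Stmt11.rot_ne_self E hne12.symm (hv1.trans hv2.symm))
  · -- E.rot d1 = d2
    have h2 : E.rot d2 = d3 := by
      rcases hmem (E.rot d2) (by rw [E.fst_rot, hv2]) with h2 | h2 | h2
      · exact absurd h2 (fun h2 =>
          Stmt11.rot_not_back E (hv1.trans hv3.symm) hne13.symm hne23.symm h1 h2)
      · exact absurd h2 (Stmt11.rot_ne_self E hne23.symm (hv2.trans hv3.symm))
      · exact h2
    have h3 : E.rot d3 = d1 := by
      rcases hmem (E.rot d3) (by rw [E.fst_rot, hv3]) with h3 | h3 | h3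
      · exact h3
      · exact absurd h3 (fun h3 => hne13 (E.rot.injective (h1.trans h3.symm)))
      · exact absurd h3 (Stmt11.rot_ne_self E hne13 (hv3.trans hv1.symm))
    exact Stmt11.core E hmin h4 h9 v hdeg d1 d2 d3 hv1 hv2 hv3 h1 h2 h3
      hne12 hne13 hne23 hf1 hf2 hf3
  · -- E.rot d1 = d3
    have h2 : E.rot d3 = d2 := by
      rcases hmem (E.rot d3) (by rw [E.fst_rot, hv3]) with h2 | h2 | h2
      · exact absurd h2 (fun h2 =>
          Stmt11.rot_not_back E (hv1.trans hv2.symm) hne12.symm hne23 h1 h2)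
      · exact h2
      · exact absurd h2 (Stmt11.rot_ne_self E hne13 (hv3.trans hv1.symm))
    have h3 : E.rot d2 = d1 := by
      rcases hmem (E.rot d2) (by rw [E.fst_rot, hv2]) with h3 | h3 | h3
      · exact h3
      · exact absurd h3 (Stmt11.rot_ne_self E hne23.symm (hv2.trans hv3.symm))
      · exact absurd h3 (fun h3 =>
          Stmt11.rot_not_back E (hv2.trans hv1.symm) hne12 hne13 h3 h2)
    exact Stmt11.core E hmin h4 h9 v hdeg d1 d3 d2 hv1 hv3 hv2 h1 h2 h3
      hne13 hne12 (fun h => hne23 h.symm) hf1 hf3 hf2
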